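/- Let Φ : G → B(H) satisfy the μ-cosine equation with Φ(0) = I and Φ(x)* = Φ(−x), fix ξ ∈ H, and set f(x) := ⟨Φ(x)ξ, ξ⟩, K_f(x,y) := (1/2)(f(−y+x) + μ(x)f(−y−x)). Then K_f is a positive definite kernel: for all n, x₁,…,xₙ ∈ G and c₁,…,cₙ ∈ ℂ, ∑ᵢ∑ⱼ cᵢ conj(cⱼ) K_f(xᵢ,xⱼ) ≥ 0 (in particular it is real). -/

import Mathlib

open scoped ComplexOrder

theorem stmt_10 {G : Type*} [AddCommGroup G]
    {H : Type*} [NormedAddCommGroup H] [InnerProductSpace ℂ H] [CompleteSpace H]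
    (μ : G → ℂ) (hμ : ∀ x y, μ (x + y) = μ x * μ y) (hμ0 : μ 0 = 1)
    (hμne : ∀ x, μ x ≠ 0)
    (Φ : G → (H →L[ℂ] H))
    (hΦ : ∀ x y, Φ (x + y) + μ y • Φ (x - y) = (2 : ℂ) • (Φ x * Φ y))
    (hΦ0 : Φ 0 = 1)
    (hherm : ∀ x, ContinuousLinearMap.adjoint (Φ x) = Φ (-x))
    (ξ : H) (f : G → ℂ) (hf : ∀ x, f x = inner ℂ ξ (Φ x ξ))
    (K : G → G → ℂ)
    (hK : ∀ x y, K x y = (1 / 2 : ℂ) * (f (-y + x) + μ x * f (-y - x))) :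
    ∀ (n : ℕ) (x : Fin n → G) (c : Fin n → ℂ),
      0 ≤ ∑ i, ∑ j, c i * (starRingEnd ℂ) (c j) * K (x i) (x j) := by
  have key : ∀ x y : G, K x y = (inner ℂ (Φ y ξ) (Φ x ξ) : ℂ) := by
    intro x y
    have h1 : Φ (-y + x) + μ x • Φ (-y - x) = (2 : ℂ) • (Φ (-y) * Φ x) := hΦ (-y) x
    have h2 : (inner ℂ (Φ y ξ) (Φ x ξ) : ℂ) = inner ℂ ξ (Φ (-y) (Φ x ξ)) := by
      rw [← hherm y, ContinuousLinearMap.adjoint_inner_right]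
    have h4 : ((2 : ℂ) • (Φ (-y) * Φ x)) ξ = Φ (-y + x) ξ + μ x • Φ (-y - x) ξ := by
      rw [← h1]; simp
    have h6 : f (-y + x) + μ x * f (-y - x)
        = (2 : ℂ) * inner ℂ ξ (Φ (-y) (Φ x ξ)) := by
      have h5 : (inner ℂ ξ (((2 : ℂ) • (Φ (-y) * Φ x)) ξ) : ℂ)
          = (2 : ℂ) * inner ℂ ξ ((Φ (-y) * Φ x) ξ) := by
        simp [inner_smul_right]
      rw [hf, hf, ← inner_smul_right, ← inner_add_right, ← h4, h5]
      rfl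
    rw [hK, h2, h6]; ring
  intro n x c
  have hsum : ∑ i, ∑ j, c i * (starRingEnd ℂ) (c j) * K (x i) (x j)
      = (inner ℂ (∑ j, c j • Φ (x j) ξ) (∑ i, c i • Φ (x i) ξ) : ℂ) := by
    rw [Finset.sum_comm, sum_inner]
    apply Finset.sum_congr rfl
    intro j _
    rw [inner_smul_left, inner_sum, Finset.mul_sum]
    apply Finset.sum_congr rfl
    intro i _
    rw [inner_smul_right, key]
    ring
  rw [hsum, inner_self_eq_norm_sq_to_K]
  positivity
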